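/- Let t ≥ 1 and k ≥ t+2 be integers and let n ≥ 2k. Then the family A_t = {A ∈ binom([n],k) : |A ∩ {1,…,t+2}| ≥ t+1} satisfies |I(A_t)| = C(t+2,t) · Σ_{j=0}^{k−t−1} C(n−t−2, j) + C(t+2,t+1) · Σ_{j=0}^{k−t−2} C(n−t−2, j) + Σ_{j=0}^{k−t−3} C(n−t−2, j), where C(a,b) denotes the binomial coefficient a choose b. -/

import Mathlib

open Finset

/-- The collection of distinct intersections `{F ∩ G : F, G ∈ 𝓕, F ≠ G}`. -/
def interFam (F : Finset (Finset ℕ)) : Finset (Finset ℕ) :=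
  ((F ×ˢ F).filter fun p => p.1 ≠ p.2).image fun p => p.1 ∩ p.2

/-- A family is `t`-intersecting if any two members meet in at least `t` elements. -/
def tIntersecting (t : ℕ) (F : Finset (Finset ℕ)) : Prop :=
  ∀ A ∈ F, ∀ B ∈ F, t ≤ (A ∩ B).card

/-- The family `𝓐_t = {A ∈ [n]^(k) : |A ∩ {1,…,t+2}| ≥ t+1}`. -/
def At (n k t : ℕ) : Finset (Finset ℕ) :=
  ((Finset.Icc 1 n).powersetCard k).filter fun A => t + 1 ≤ (A ∩ Finset.Icc 1 (t + 2)).card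

/-- A `t`-intersecting family `F ⊆ [n]^(k)` is saturated if no `k`-set outside `F`
can be added keeping the `t`-intersecting property. -/
def saturated (n k t : ℕ) (F : Finset (Finset ℕ)) : Prop :=
  ∀ G ∈ (Finset.Icc 1 n).powersetCard k, G ∉ F → ¬ tIntersecting t (insert G F)

/-- The family of `t`-transversals `T(F)`. -/
def transv (n k t : ℕ) (F : Finset (Finset ℕ)) : Finset (Finset ℕ) :=
  (Finset.Icc 1 n).powerset.filter fun T => T.card ≤ k ∧ ∀ A ∈ F, t ≤ (T ∩ A).card

/-- The minimal members (under inclusion) of a family. -/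
def minFam (S : Finset (Finset ℕ)) : Finset (Finset ℕ) :=
  S.filter fun B => ∀ B' ∈ S, B' ⊆ B → B' = B

/-- Counting subsets of `M` of size `< m`. -/
lemma card_filter_card_lt (M : Finset ℕ) (m : ℕ) :
    ((M.powerset.filter fun B => B.card < m)).card
      = ∑ j ∈ Finset.range m, (M.card).choose j := by
  have h : M.powerset.filter (fun B => B.card < m)
      = (Finset.range m).biUnion (fun j => M.powersetCard j) := by
    ext B
    simp only [mem_filter, mem_powerset, mem_biUnion, mem_range, mem_powersetCard]
    constructor
    · rintro ⟨h1, h2⟩; exact ⟨_, h2, h1, rfl⟩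
    · rintro ⟨j, hj, h1, rfl⟩; exact ⟨h1, hj⟩
  rw [h, card_biUnion]
  · simp [card_powersetCard]
  · intro i _ j _ hij
    simp only [disjoint_left, mem_powersetCard]
    rintro B ⟨-, hB⟩ ⟨-, hB'⟩
    exact hij (hB ▸ hB')

/-- Constructing an element of `interFam (At n k t)` from a set with two
disjoint extensions. -/
lemma mem_interFam_At (n k t : ℕ) (S P Q : Finset ℕ)
    (hS : S ⊆ Finset.Icc 1 n) (hP : P ⊆ Finset.Icc 1 n) (hQ : Q ⊆ Finset.Icc 1 n)
    (hPS : Disjoint P S) (hQS : Disjoint Q S) (hPQ : Disjoint P Q)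
    (hPne : P.Nonempty)
    (hcP : S.card + P.card = k) (hcQ : S.card + Q.card = k)
    (hHP : t + 1 ≤ ((S ∪ P) ∩ Finset.Icc 1 (t + 2)).card)
    (hHQ : t + 1 ≤ ((S ∪ Q) ∩ Finset.Icc 1 (t + 2)).card) :
    S ∈ interFam (At n k t) := by
  obtain ⟨x, hx⟩ := hPne
  have hFG : (S ∪ P) ∩ (S ∪ Q) = S := by
    rw [← union_inter_distrib_left, (Finset.disjoint_iff_inter_eq_empty.mp hPQ), union_empty]
  have hne : (S ∪ P) ≠ (S ∪ Q) := by
    intro h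
    have hx' : x ∈ S ∪ Q := h ▸ (mem_union_right S hx)
    rcases mem_union.mp hx' with h1 | h1
    · exact (disjoint_left.mp hPS hx) h1
    · exact (disjoint_left.mp hPQ hx) h1
  simp only [interFam, mem_image, mem_filter, mem_product]
  refine ⟨(S ∪ P, S ∪ Q), ⟨⟨?_, ?_⟩, hne⟩, hFG⟩
  · simp only [At, mem_filter, mem_powersetCard]
    exact ⟨⟨union_subset hS hP, by rw [card_union_of_disjoint hPS.symm]; exact hcP⟩, hHP⟩
  · simp only [At, mem_filter, mem_powersetCard]
    exact ⟨⟨union_subset hS hQ, by rw [card_union_of_disjoint hQS.symm]; exact hcQ⟩, hHQ⟩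

/-- The key structural characterization of `interFam (At n k t)`. -/
lemma interFam_At_eq (t k n : ℕ) (ht : 1 ≤ t) (hk : t + 2 ≤ k) (hn : 2 * k ≤ n) :
    interFam (At n k t) = (Finset.Icc 1 n).powerset.filter
      (fun S => t ≤ (S ∩ Finset.Icc 1 (t + 2)).card ∧ S.card < k) := by
  have hHU : Finset.Icc 1 (t + 2) ⊆ Finset.Icc 1 n := Finset.Icc_subset_Icc_right (by omega)
  have hHcard : (Finset.Icc 1 (t + 2)).card = t + 2 := by rw [Nat.card_Icc]; omega
  have hUcard : (Finset.Icc 1 n).card = n := by rw [Nat.card_Icc]; omega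
  ext S
  constructor
  · intro hS
    simp only [interFam, mem_image, mem_filter, mem_product] at hS
    obtain ⟨⟨F, G⟩, ⟨⟨hF, hG⟩, hne⟩, rfl⟩ := hS
    simp only [At, mem_filter, mem_powersetCard] at hF hG
    obtain ⟨⟨hFsub, hFcard⟩, hFH⟩ := hF
    obtain ⟨⟨hGsub, hGcard⟩, hGH⟩ := hG
    simp only [mem_filter, mem_powerset]
    refine ⟨inter_subset_left.trans hFsub, ?_, ?_⟩
    · have h1 : (F ∩ G) ∩ Finset.Icc 1 (t + 2)
          = (F ∩ Finset.Icc 1 (t + 2)) ∩ (G ∩ Finset.Icc 1 (t + 2)) := by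
        ext x; simp only [mem_inter]; tauto
      have h3 := Finset.card_union_add_card_inter (F ∩ Finset.Icc 1 (t + 2))
        (G ∩ Finset.Icc 1 (t + 2))
      have h4 : ((F ∩ Finset.Icc 1 (t + 2)) ∪ (G ∩ Finset.Icc 1 (t + 2))).card ≤ t + 2 := by
        calc _ ≤ (Finset.Icc 1 (t + 2)).card :=
              card_le_card (union_subset inter_subset_right inter_subset_right)
          _ = t + 2 := hHcard
      rw [h1]; omega
    · have hle : (F ∩ G).card ≤ k := hFcard ▸ card_le_card inter_subset_left
      refine lt_of_le_of_ne hle ?_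
      intro hc
      have e1 : F ∩ G = F := eq_of_subset_of_card_le inter_subset_left (by omega)
      have e2 : F ∩ G = G := eq_of_subset_of_card_le inter_subset_right (by omega)
      exact hne (by rw [← e1, e2])
  · intro hS
    simp only [mem_filter, mem_powerset] at hS
    obtain ⟨hSsub, hSH, hSk⟩ := hS
    have hcu := Finset.card_union_add_card_inter S (Finset.Icc 1 (t + 2))
    rw [hHcard] at hcu
    have hSHle : (S ∩ Finset.Icc 1 (t + 2)).card ≤ S.card := card_le_card inter_subset_left
    have hRcard : ((Finset.Icc 1 n) \ (S ∪ Finset.Icc 1 (t + 2))).card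
        = n - (S ∪ Finset.Icc 1 (t + 2)).card := by
      rw [card_sdiff_of_subset (union_subset hSsub hHU), hUcard]
    have hRdisj : Disjoint ((Finset.Icc 1 n) \ (S ∪ Finset.Icc 1 (t + 2)))
        (S ∪ Finset.Icc 1 (t + 2)) := sdiff_disjoint
    by_cases hcase : t + 1 ≤ (S ∩ Finset.Icc 1 (t + 2)).card
    · -- head already large: take disjoint extensions outside S ∪ H
      obtain ⟨P, hPR, hPcard⟩ := (fun (s : Finset ℕ) (m : ℕ) (h : m ≤ s.card) => Finset.exists_subset_card_eq (s := s) (n := m) h)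
        ((Finset.Icc 1 n) \ (S ∪ Finset.Icc 1 (t + 2))) (k - S.card) (by omega)
      obtain ⟨Q, hQR, hQcard⟩ := (fun (s : Finset ℕ) (m : ℕ) (h : m ≤ s.card) => Finset.exists_subset_card_eq (s := s) (n := m) h)
        (((Finset.Icc 1 n) \ (S ∪ Finset.Icc 1 (t + 2))) \ P) (k - S.card)
        (by rw [card_sdiff_of_subset hPR, hPcard]; omega)
      have hPdisj : Disjoint P (S ∪ Finset.Icc 1 (t + 2)) :=
        disjoint_of_subset_left hPR hRdisj
      have hQdisj : Disjoint Q (S ∪ Finset.Icc 1 (t + 2)) :=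
        disjoint_of_subset_left (hQR.trans sdiff_subset) hRdisj
      have hPQ : Disjoint P Q := (disjoint_of_subset_left hQR sdiff_disjoint).symm
      apply mem_interFam_At n k t S P Q hSsub
        (hPR.trans sdiff_subset) ((hQR.trans sdiff_subset).trans sdiff_subset)
        ((disjoint_union_right.mp hPdisj).1) ((disjoint_union_right.mp hQdisj).1) hPQ
        (card_pos.mp (by omega)) (by omega) (by omega)
      · exact le_trans hcase (card_le_card (inter_subset_inter subset_union_left (Subset.refl _)))
      · exact le_trans hcase (card_le_card (inter_subset_inter subset_union_left (Subset.refl _)))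
    · -- head equals t: must add one new head element on each side
      have ha : (S ∩ Finset.Icc 1 (t + 2)).card = t := by omega
      have hHS2 : ((Finset.Icc 1 (t + 2)) \ S).card = 2 := by
        have h5 := Finset.card_inter_add_card_sdiff (Finset.Icc 1 (t + 2)) S
        rw [hHcard, Finset.inter_comm] at h5
        omega
      obtain ⟨x, hx, y, hy, hxy⟩ := Finset.one_lt_card.mp (by omega :
        1 < ((Finset.Icc 1 (t + 2)) \ S).card)
      obtain ⟨hxH, hxS⟩ := mem_sdiff.mp hx
      obtain ⟨hyH, hyS⟩ := mem_sdiff.mp hy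
      obtain ⟨P, hPR, hPcard⟩ := (fun (s : Finset ℕ) (m : ℕ) (h : m ≤ s.card) => Finset.exists_subset_card_eq (s := s) (n := m) h)
        ((Finset.Icc 1 n) \ (S ∪ Finset.Icc 1 (t + 2))) (k - S.card - 1) (by omega)
      obtain ⟨Q, hQR, hQcard⟩ := (fun (s : Finset ℕ) (m : ℕ) (h : m ≤ s.card) => Finset.exists_subset_card_eq (s := s) (n := m) h)
        (((Finset.Icc 1 n) \ (S ∪ Finset.Icc 1 (t + 2))) \ P) (k - S.card - 1)
        (by rw [card_sdiff_of_subset hPR, hPcard]; omega)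
      have hPdisj : Disjoint P (S ∪ Finset.Icc 1 (t + 2)) :=
        disjoint_of_subset_left hPR hRdisj
      have hQdisj : Disjoint Q (S ∪ Finset.Icc 1 (t + 2)) :=
        disjoint_of_subset_left (hQR.trans sdiff_subset) hRdisj
      have hPQ : Disjoint P Q := (disjoint_of_subset_left hQR sdiff_disjoint).symm
      have hxP : x ∉ P := fun h => (disjoint_left.mp hPdisj h) (mem_union_right _ hxH)
      have hyQ : y ∉ Q := fun h => (disjoint_left.mp hQdisj h) (mem_union_right _ hyH)
      have hxQ : x ∉ Q := fun h => (disjoint_left.mp hQdisj h) (mem_union_right _ hxH)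
      have hyP : y ∉ P := fun h => (disjoint_left.mp hPdisj h) (mem_union_right _ hyH)
      have hPS : Disjoint P S := (disjoint_union_right.mp hPdisj).1
      have hQS : Disjoint Q S := (disjoint_union_right.mp hQdisj).1
      have hP'card : (insert x P).card = k - S.card := by
        rw [card_insert_of_notMem hxP, hPcard]; omega
      have hQ'card : (insert y Q).card = k - S.card := by
        rw [card_insert_of_notMem hyQ, hQcard]; omega
      have headP : t + 1 ≤ ((S ∪ insert x P) ∩ Finset.Icc 1 (t + 2)).card := by
        have hsub : insert x (S ∩ Finset.Icc 1 (t + 2))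
            ⊆ (S ∪ insert x P) ∩ Finset.Icc 1 (t + 2) := by
          intro z hz
          rcases mem_insert.mp hz with rfl | hz
          · exact mem_inter.mpr ⟨mem_union_right _ (mem_insert_self _ _), hxH⟩
          · exact mem_inter.mpr ⟨mem_union_left _ (mem_inter.mp hz).1, (mem_inter.mp hz).2⟩
        calc t + 1 = (insert x (S ∩ Finset.Icc 1 (t + 2))).card := by
              rw [card_insert_of_notMem (fun h => hxS (mem_inter.mp h).1), ha]
          _ ≤ _ := card_le_card hsub
      have headQ : t + 1 ≤ ((S ∪ insert y Q) ∩ Finset.Icc 1 (t + 2)).card := by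
        have hsub : insert y (S ∩ Finset.Icc 1 (t + 2))
            ⊆ (S ∪ insert y Q) ∩ Finset.Icc 1 (t + 2) := by
          intro z hz
          rcases mem_insert.mp hz with rfl | hz
          · exact mem_inter.mpr ⟨mem_union_right _ (mem_insert_self _ _), hyH⟩
          · exact mem_inter.mpr ⟨mem_union_left _ (mem_inter.mp hz).1, (mem_inter.mp hz).2⟩
        calc t + 1 = (insert y (S ∩ Finset.Icc 1 (t + 2))).card := by
              rw [card_insert_of_notMem (fun h => hyS (mem_inter.mp h).1), ha]
          _ ≤ _ := card_le_card hsub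
      apply mem_interFam_At n k t S (insert x P) (insert y Q) hSsub
        (insert_subset (hHU hxH) (hPR.trans sdiff_subset))
        (insert_subset (hHU hyH) ((hQR.trans sdiff_subset).trans sdiff_subset))
        (disjoint_insert_left.mpr ⟨hxS, hPS⟩)
        (disjoint_insert_left.mpr ⟨hyS, hQS⟩)
        (disjoint_insert_left.mpr ⟨by simp [mem_insert, hxy, hxQ],
          disjoint_insert_right.mpr ⟨hyP, hPQ⟩⟩)
        (insert_nonempty _ _)
        (by rw [hP'card]; omega) (by rw [hQ'card]; omega)
        headP headQ

/-- Counting one slice. -/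
lemma slice_card (n k t i : ℕ) (hti : t ≤ i) (hik : i ≤ t + 2) (htn : t + 2 ≤ n)
    (hik2 : t + 2 ≤ k) :
    (((Finset.Icc 1 n).powerset.filter fun S =>
        t ≤ (S ∩ Finset.Icc 1 (t + 2)).card ∧ S.card < k).filter
        fun S => (S ∩ Finset.Icc 1 (t + 2)).card = i).card
      = (t + 2).choose i * ∑ j ∈ Finset.range (k - i), (n - t - 2).choose j := by
  have hHU : Finset.Icc 1 (t + 2) ⊆ Finset.Icc 1 n := Finset.Icc_subset_Icc_right (by omega)
  have hHcard : (Finset.Icc 1 (t + 2)).card = t + 2 := by rw [Nat.card_Icc]; omega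
  have hMcard : ((Finset.Icc 1 n) \ Finset.Icc 1 (t + 2)).card = n - t - 2 := by
    rw [card_sdiff_of_subset hHU, Nat.card_Icc, Nat.card_Icc]; omega
  have himg : (((Finset.Icc 1 n).powerset.filter fun S =>
        t ≤ (S ∩ Finset.Icc 1 (t + 2)).card ∧ S.card < k).filter
        fun S => (S ∩ Finset.Icc 1 (t + 2)).card = i)
      = ((((Finset.Icc 1 (t + 2)).powersetCard i) ×ˢ
          (((Finset.Icc 1 n) \ Finset.Icc 1 (t + 2)).powerset.filter
            fun B => B.card < k - i)).image fun p => p.1 ∪ p.2) := by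
    ext S
    simp only [mem_filter, mem_powerset, mem_image, mem_product, mem_powersetCard]
    constructor
    · rintro ⟨⟨hSU, hSt, hSk⟩, hSi⟩
      refine ⟨(S ∩ Finset.Icc 1 (t + 2), S \ Finset.Icc 1 (t + 2)),
        ⟨⟨inter_subset_right, hSi⟩,
          sdiff_subset_sdiff hSU (Subset.refl _), ?_⟩, ?_⟩
      · show (S \ Finset.Icc 1 (t + 2)).card < k - i
        have h5 := Finset.card_inter_add_card_sdiff S (Finset.Icc 1 (t + 2))
        omega
      · ext z; simp only [mem_union, mem_inter, mem_sdiff]; tauto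
    · rintro ⟨⟨A, B⟩, ⟨⟨hAH, hAcard⟩, hBM, hBcard⟩, rfl⟩
      dsimp only at hAH hAcard hBM hBcard ⊢
      have hBH : Disjoint B (Finset.Icc 1 (t + 2)) :=
        disjoint_of_subset_left hBM sdiff_disjoint
      have hABH : (A ∪ B) ∩ Finset.Icc 1 (t + 2) = A := by
        rw [union_inter_distrib_right, inter_eq_left.mpr hAH,
          Finset.disjoint_iff_inter_eq_empty.mp hBH, union_empty]
      have hdisj : Disjoint A B :=
        (Finset.sdiff_disjoint.symm : Disjoint (Finset.Icc 1 (t + 2)) _).mono hAH hBM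
      refine ⟨⟨union_subset (hAH.trans hHU) (hBM.trans sdiff_subset), ?_, ?_⟩, ?_⟩
      · rw [hABH]; omega
      · rw [card_union_of_disjoint hdisj]; omega
      · rw [hABH]; exact hAcard
  have hinj : Set.InjOn (fun p : Finset ℕ × Finset ℕ => p.1 ∪ p.2)
      ((((Finset.Icc 1 (t + 2)).powersetCard i) ×ˢ
        (((Finset.Icc 1 n) \ Finset.Icc 1 (t + 2)).powerset.filter
          fun B => B.card < k - i)) : Finset (Finset ℕ × Finset ℕ)) := by
    intro p hp q hq hpq
    simp only [coe_product, Set.mem_prod, mem_coe, mem_powersetCard, mem_filter,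
      mem_powerset] at hp hq
    have key : ∀ r : Finset ℕ × Finset ℕ,
        r.1 ⊆ Finset.Icc 1 (t + 2) → r.2 ⊆ (Finset.Icc 1 n) \ Finset.Icc 1 (t + 2) →
        r.1 = (r.1 ∪ r.2) ∩ Finset.Icc 1 (t + 2) ∧ r.2 = (r.1 ∪ r.2) \ Finset.Icc 1 (t + 2) := by
      intro r h1 h2
      have hBH : Disjoint r.2 (Finset.Icc 1 (t + 2)) :=
        disjoint_of_subset_left h2 sdiff_disjoint
      constructor
      · rw [union_inter_distrib_right, inter_eq_left.mpr h1,
          Finset.disjoint_iff_inter_eq_empty.mp hBH, union_empty]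
      · rw [union_sdiff_distrib, sdiff_eq_empty_iff_subset.mpr h1, empty_union,
          Finset.sdiff_eq_self_of_disjoint hBH]
    obtain ⟨e1, e2⟩ := key p hp.1.1 hp.2.1
    obtain ⟨f1, f2⟩ := key q hq.1.1 hq.2.1
    dsimp only at hpq
    exact Prod.ext (by rw [e1, f1, hpq]) (by rw [e2, f2, hpq])
  rw [himg, Finset.card_image_of_injOn hinj, Finset.card_product,
    Finset.card_powersetCard, hHcard, card_filter_card_lt, hMcard]

theorem stmt3 (t k n : ℕ) (ht : 1 ≤ t) (hk : t + 2 ≤ k) (hn : 2 * k ≤ n) :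
    (interFam (At n k t)).card =
      (t + 2).choose t * ∑ j ∈ Finset.range (k - t), (n - t - 2).choose j
        + (t + 2).choose (t + 1) * ∑ j ∈ Finset.range (k - t - 1), (n - t - 2).choose j
        + ∑ j ∈ Finset.range (k - t - 2), (n - t - 2).choose j := by
  have hHcard : (Finset.Icc 1 (t + 2)).card = t + 2 := by rw [Nat.card_Icc]; omega
  rw [interFam_At_eq t k n ht hk hn]
  have hsplit : ((Finset.Icc 1 n).powerset.filter fun S =>
        t ≤ (S ∩ Finset.Icc 1 (t + 2)).card ∧ S.card < k)
      = (Finset.Icc t (t + 2)).biUnion (fun i =>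
          ((Finset.Icc 1 n).powerset.filter fun S =>
            t ≤ (S ∩ Finset.Icc 1 (t + 2)).card ∧ S.card < k).filter
            (fun S => (S ∩ Finset.Icc 1 (t + 2)).card = i)) := by
    ext S
    simp only [mem_biUnion, mem_filter, mem_powerset, Finset.mem_Icc]
    constructor
    · rintro ⟨h1, h2, h3⟩
      refine ⟨(S ∩ Finset.Icc 1 (t + 2)).card, ⟨h2, ?_⟩, ⟨h1, h2, h3⟩, rfl⟩
      calc (S ∩ Finset.Icc 1 (t + 2)).card ≤ (Finset.Icc 1 (t + 2)).card :=
            card_le_card inter_subset_right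
        _ = t + 2 := hHcard
    · rintro ⟨i, _, h, _⟩; exact h
  rw [hsplit, card_biUnion]
  · have hIcc : Finset.Icc t (t + 2) = {t, t + 1, t + 2} := by
      ext x; simp only [Finset.mem_Icc, mem_insert, mem_singleton]; omega
    rw [hIcc, Finset.sum_insert (by simp), Finset.sum_insert (by simp), Finset.sum_singleton,
      slice_card n k t t le_rfl (by omega) (by omega) hk,
      slice_card n k t (t + 1) (by omega) (by omega) (by omega) hk,
      slice_card n k t (t + 2) (by omega) le_rfl (by omega) hk,
      Nat.choose_self, one_mul,
      show k - (t + 1) = k - t - 1 from by omega,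
      show k - (t + 2) = k - t - 2 from by omega]
    ring
  · intro i hi j hj hij
    simp only [disjoint_left, mem_filter]
    rintro S ⟨-, h1⟩ ⟨-, h2⟩
    exact hij (h1 ▸ h2)
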